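/- Every completion-forced node u of the cotree T is filled (i.e. x is adjacent to all of V(u)) in every constrained cograph completion of G+x. -/

import Mathlib

universe u

def IsCograph {α : Type*} (G : SimpleGraph α) : Prop :=
  ¬ ∃ f : Fin 4 → α, Function.Injective f ∧
      ∀ i j : Fin 4, G.Adj (f i) (f j) ↔ (i.val + 1 = j.val ∨ j.val + 1 = i.val)

inductive Cotree (V : Type u) : Type u where
  | leaf : V → Cotree V
  | node : Bool → List (Cotree V) → Cotree V

namespace Cotree

variable {V : Type u}

def leaves : Cotree V → List V
  | .leaf v => [v]
  | .node _ ts => ts.attach.flatMap (fun t => t.1.leaves)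

decreasing_by simp_wf; have := List.sizeOf_lt_of_mem t.2; omega

def subtrees : Cotree V → List (Cotree V)
  | .leaf v => [.leaf v]
  | .node b ts => .node b ts :: ts.attach.flatMap (fun t => t.1.subtrees)

decreasing_by simp_wf; have := List.sizeOf_lt_of_mem t.2; omega

def children : Cotree V → List (Cotree V)
  | .leaf _ => []
  | .node _ ts => ts

def isSeries : Cotree V → Prop
  | .node true _ => True
  | _ => False

def isParallel : Cotree V → Prop
  | .node false _ => True
  | _ => False

def adj : Cotree V → V → V → Prop
  | .leaf _, _, _ => False
  | .node b ts, x, y =>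
      (∃ t ∈ ts.attach, adj t.1 x y) ∨
      (b = true ∧ ∃ t ∈ ts.attach, ∃ s ∈ ts.attach,
        t.1 ≠ s.1 ∧ x ∈ t.1.leaves ∧ y ∈ s.1.leaves)

decreasing_by simp_wf; have := List.sizeOf_lt_of_mem t.2; omega

def valid : Cotree V → Prop
  | .leaf _ => True
  | .node b ts => 2 ≤ ts.length ∧ ∀ t ∈ ts.attach, valid t.1 ∧
      ∀ b' ts', t.1 = .node b' ts' → b' ≠ b

decreasing_by simp_wf; have := List.sizeOf_lt_of_mem t.2; omega

def hollow (N : Set V) (t : Cotree V) : Prop := ∀ v ∈ t.leaves, v ∉ N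
def full (N : Set V) (t : Cotree V) : Prop := ∀ v ∈ t.leaves, v ∈ N
def uniform (N : Set V) (t : Cotree V) : Prop := full N t ∨ hollow N t
def mixed (N : Set V) (t : Cotree V) : Prop := ¬ uniform N t

def forced (N : Set V) : Cotree V → Prop
  | .leaf v => v ∈ N
  | .node b ts =>
      full N (.node b ts) ∨
      (b = false ∧ ∀ t ∈ ts, ¬ hollow N t) ∨
      (b = true ∧ ∀ t ∈ ts.attach, forced N t.1)

decreasing_by simp_wf; have := List.sizeOf_lt_of_mem t.2; omega

def eligible (N : Set V) : Cotree V → Cotree V → Prop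
  | .leaf v, u => u = .leaf v
  | .node b ts, u => u = .node b ts ∨
      ∃ t ∈ ts.attach, eligible N t.1 u ∧
        (b = false → ∀ s ∈ ts, s ≠ t.1 → hollow N s)

decreasing_by simp_wf; have := List.sizeOf_lt_of_mem t.2; omega

def IsLcaLeaves (T u : Cotree V) (x y : V) : Prop :=
  u ∈ T.subtrees ∧ x ∈ u.leaves ∧ y ∈ u.leaves ∧
    ∀ c ∈ u.children, ¬ (x ∈ c.leaves ∧ y ∈ c.leaves)

def IsLcaNodeLeaf (T w u : Cotree V) (y : V) : Prop :=
  w ∈ T.subtrees ∧ u ∈ w.subtrees ∧ y ∈ w.leaves ∧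
    ∀ c ∈ w.children, ¬ (u ∈ c.subtrees ∧ y ∈ c.leaves)

def graphOf (T : Cotree V) : SimpleGraph V :=
  SimpleGraph.fromRel (fun a b => T.adj a b)

def graphPlus (T : Cotree V) (N : Set V) : SimpleGraph (Option V) :=
  SimpleGraph.fromRel (fun a b =>
    match a, b with
    | some u, some v => T.adj u v
    | none, some v => v ∈ N
    | _, _ => False)

def IsConstrainedCompletion (T : Cotree V) (Nx N' : Set V) : Prop :=
  Nx ⊆ N' ∧ (∀ v ∈ N', v ∈ T.leaves) ∧ IsCograph (graphPlus T N')

def IsMinimalConstrainedCompletion (T : Cotree V) (Nx N' : Set V) : Prop :=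
  IsConstrainedCompletion T Nx N' ∧
    ∀ N'' ⊆ N', IsConstrainedCompletion T Nx N'' → N'' = N'

def IsInsertionNode (T : Cotree V) (N' : Set V) (u : Cotree V) : Prop :=
  u ∈ T.subtrees ∧ mixed N' u ∧ (∀ c ∈ u.children, uniform N' c) ∧
    ∀ y ∈ T.leaves, y ∉ u.leaves →
      (y ∈ N' ↔ ∃ w, IsLcaNodeLeaf T w u y ∧ w.isSeries)

def IsCMInsertionNode (T : Cotree V) (Nx : Set V) (u : Cotree V) : Prop :=
  ∃ N', IsMinimalConstrainedCompletion T Nx N' ∧ IsInsertionNode T N' u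

def anchored (T u : Cotree V) (Nx : Set V) : Set V :=
  Nx ∪ {y | y ∈ T.leaves ∧ y ∉ u.leaves ∧ ∃ w, IsLcaNodeLeaf T w u y ∧ w.isSeries}
     ∪ {y | ∃ c ∈ u.children, ¬ hollow Nx c ∧ y ∈ c.leaves}

theorem indOn {P : Cotree V → Prop} (hl : ∀ v, P (.leaf v))
    (hn : ∀ b ts, (∀ t ∈ ts, P t) → P (.node b ts)) : ∀ t, P t
  | .leaf v => hl v
  | .node b ts => hn b ts (fun t _ => indOn hl hn t)
decreasing_by simp_wf; have := List.sizeOf_lt_of_mem (by assumption : t ∈ ts); omega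

theorem attach_flatMap' {α β : Type*} (ts : List α) (f : α → List β) :
    ts.attach.flatMap (fun t => f t.1) = ts.flatMap f := by
  rw [List.flatMap, List.flatMap]
  simp [List.flatMap, List.attach_map_val]

theorem leaves_node (b : Bool) (ts : List (Cotree V)) :
    (node b ts).leaves = ts.flatMap leaves := by
  rw [leaves, attach_flatMap']

theorem mem_leaves_node {b : Bool} {ts : List (Cotree V)} {x : V} :
    x ∈ (node b ts).leaves ↔ ∃ t ∈ ts, x ∈ t.leaves := by
  simp [leaves_node]

theorem subtrees_node (b : Bool) (ts : List (Cotree V)) :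
    (node b ts).subtrees = node b ts :: ts.flatMap subtrees := by
  rw [subtrees, attach_flatMap']

theorem mem_subtrees_node {b : Bool} {ts : List (Cotree V)} {u : Cotree V} :
    u ∈ (node b ts).subtrees ↔ u = node b ts ∨ ∃ t ∈ ts, u ∈ t.subtrees := by
  simp [subtrees_node]

theorem mem_subtrees_leaf {v : V} {u : Cotree V} :
    u ∈ (leaf v).subtrees ↔ u = leaf v := by
  rw [subtrees]; simp

theorem adj_node {b : Bool} {ts : List (Cotree V)} {x y : V} :
    (node b ts).adj x y ↔ (∃ t ∈ ts, t.adj x y) ∨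
      (b = true ∧ ∃ t ∈ ts, ∃ s ∈ ts, t ≠ s ∧ x ∈ t.leaves ∧ y ∈ s.leaves) := by
  rw [adj]
  constructor
  · rintro (⟨t, ht, h⟩ | ⟨hb, t, ht, s, hs, h⟩)
    · exact Or.inl ⟨t.1, t.2, h⟩
    · exact Or.inr ⟨hb, t.1, t.2, s.1, s.2, h⟩
  · rintro (⟨t, ht, h⟩ | ⟨hb, t, ht, s, hs, h⟩)
    · exact Or.inl ⟨⟨t, ht⟩, List.mem_attach _ _, h⟩
    · exact Or.inr ⟨hb, ⟨t, ht⟩, List.mem_attach _ _, ⟨s, hs⟩, List.mem_attach _ _, h⟩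

theorem valid_node {b : Bool} {ts : List (Cotree V)} :
    (node b ts).valid ↔ 2 ≤ ts.length ∧ ∀ t ∈ ts, t.valid ∧
      ∀ b' ts', t = .node b' ts' → b' ≠ b := by
  rw [valid]
  constructor
  · rintro ⟨h1, h2⟩
    exact ⟨h1, fun t ht => h2 ⟨t, ht⟩ (List.mem_attach _ _)⟩
  · rintro ⟨h1, h2⟩
    exact ⟨h1, fun t _ => h2 t.1 t.2⟩

theorem forced_node {N : Set V} {b : Bool} {ts : List (Cotree V)} :
    forced N (node b ts) ↔ full N (.node b ts) ∨
      (b = false ∧ ∀ t ∈ ts, ¬ hollow N t) ∨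
      (b = true ∧ ∀ t ∈ ts, forced N t) := by
  rw [forced]
  constructor
  · rintro (h | h | ⟨hb, h⟩)
    · exact Or.inl h
    · exact Or.inr (Or.inl h)
    · exact Or.inr (Or.inr ⟨hb, fun t ht => h ⟨t, ht⟩ (List.mem_attach _ _)⟩)
  · rintro (h | h | ⟨hb, h⟩)
    · exact Or.inl h
    · exact Or.inr (Or.inl h)
    · exact Or.inr (Or.inr ⟨hb, fun t _ => h t.1 t.2⟩)

theorem self_mem_subtrees (t : Cotree V) : t ∈ t.subtrees := by
  cases t with
  | leaf v => rw [mem_subtrees_leaf]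
  | node b ts => rw [mem_subtrees_node]; exact Or.inl rfl

theorem subtrees_trans : ∀ (T : Cotree V) {w u : Cotree V},
    u ∈ w.subtrees → w ∈ T.subtrees → u ∈ T.subtrees := by
  refine indOn ?_ ?_
  · intro v w u h1 h2
    rw [mem_subtrees_leaf] at h2 ⊢
    subst h2
    rwa [mem_subtrees_leaf] at h1
  · intro b ts ih w u h1 h2
    rw [mem_subtrees_node] at h2
    rcases h2 with rfl | ⟨t, ht, h2⟩
    · rw [mem_subtrees_node] at h1 ⊢
      rcases h1 with rfl | ⟨t, ht, h1⟩
      · exact Or.inl rfl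
      · exact Or.inr ⟨t, ht, h1⟩
    · exact mem_subtrees_node.mpr (Or.inr ⟨t, ht, ih t ht h1 h2⟩)

theorem sublist_flatMap' {α β : Type*} (f : α → List β) :
    ∀ (ts : List α) {t : α}, t ∈ ts → List.Sublist (f t) (ts.flatMap f) := by
  intro ts
  induction ts with
  | nil => intro t h; simp at h
  | cons a l ih =>
    intro t h
    rw [List.flatMap_cons]
    rcases List.mem_cons.mp h with rfl | h
    · exact (List.sublist_append_left _ _)
    · exact (ih h).trans (List.sublist_append_right _ _)

theorem leaves_sublist : ∀ (T : Cotree V) {u : Cotree V},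
    u ∈ T.subtrees → List.Sublist u.leaves T.leaves := by
  refine indOn ?_ ?_
  · intro v u h
    rw [mem_subtrees_leaf] at h; subst h; exact List.Sublist.refl _
  · intro b ts ih u h
    rw [mem_subtrees_node] at h
    rcases h with rfl | ⟨t, ht, h⟩
    · exact List.Sublist.refl _
    · rw [leaves_node]
      exact (ih t ht h).trans (sublist_flatMap' leaves ts ht)

theorem leaves_nodup_of_mem {T u : Cotree V} (hnd : T.leaves.Nodup)
    (hu : u ∈ T.subtrees) : u.leaves.Nodup :=
  (leaves_sublist T hu).nodup hnd

theorem mem_leaves_of_mem_subtrees {T u : Cotree V} (hu : u ∈ T.subtrees)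
    {x : V} (hx : x ∈ u.leaves) : x ∈ T.leaves :=
  (leaves_sublist T hu).mem hx

theorem valid_of_mem_subtrees : ∀ (T : Cotree V), T.valid → ∀ {u : Cotree V},
    u ∈ T.subtrees → u.valid := by
  refine indOn ?_ ?_
  · intro v _ u h
    rw [mem_subtrees_leaf] at h; subst h; rw [valid]; trivial
  · intro b ts ih hv u h
    rw [mem_subtrees_node] at h
    rcases h with rfl | ⟨t, ht, h⟩
    · exact hv
    · exact ih t ht ((valid_node.mp hv).2 t ht).1 h

theorem exists_leaf_of_valid : ∀ (t : Cotree V), t.valid → ∃ x, x ∈ t.leaves := by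
  refine indOn ?_ ?_
  · intro v _; exact ⟨v, by rw [leaves]; simp⟩
  · intro b ts ih hv
    rcases valid_node.mp hv with ⟨hlen, hch⟩
    match ts, hlen with
    | t :: l, _ =>
      obtain ⟨x, hx⟩ := ih t (List.mem_cons_self) (hch t (List.mem_cons_self)).1
      exact ⟨x, mem_leaves_node.mpr ⟨t, List.mem_cons_self, hx⟩⟩

theorem eq_of_mem_flatMap {α β : Type*} (f : α → List β) :
    ∀ (ts : List α), (ts.flatMap f).Nodup → ∀ {t s : α} {x : β},
      t ∈ ts → s ∈ ts → x ∈ f t → x ∈ f s → t = s := by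
  intro ts
  induction ts with
  | nil => intro _ t s x h; simp at h
  | cons a l ih =>
    intro hnd t s x ht hs hxt hxs
    rw [List.flatMap_cons, List.nodup_append] at hnd
    rcases List.mem_cons.mp ht with rfl | ht' <;> rcases List.mem_cons.mp hs with rfl | hs'
    · rfl
    · exact (hnd.2.2 x hxt x (List.mem_flatMap.mpr ⟨s, hs', hxs⟩) rfl).elim
    · exact (hnd.2.2 x hxs x (List.mem_flatMap.mpr ⟨t, ht', hxt⟩) rfl).elim
    · exact ih hnd.2.1 ht' hs' hxt hxs

theorem exists_ne_of_two_le {α β : Type*} (f : α → List β) :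
    ∀ (ts : List α), 2 ≤ ts.length → (ts.flatMap f).Nodup →
      ∀ t ∈ ts, ∀ x ∈ f t, ∃ s ∈ ts, s ≠ t := by
  intro ts
  match ts with
  | a :: b :: l =>
    intro _ hnd t ht x hx
    by_cases hat : a = t
    · refine ⟨b, by simp, ?_⟩
      rintro rfl
      subst hat
      rw [List.flatMap_cons, List.nodup_append] at hnd
      exact hnd.2.2 x hx x (by rw [List.flatMap_cons]; exact List.mem_append_left _ hx) rfl
    · exact ⟨a, by simp, hat⟩
  | [] => intro h; simp at h
  | [a] => intro h; simp at h

theorem adj_mem_leaves : ∀ (t : Cotree V) {x y : V},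
    t.adj x y → x ∈ t.leaves ∧ y ∈ t.leaves := by
  refine indOn ?_ ?_
  · intro v x y h; rw [adj] at h; exact h.elim
  · intro b ts ih x y h
    rcases adj_node.mp h with ⟨t, ht, h⟩ | ⟨_, t, ht, s, hs, _, hx, hy⟩
    · obtain ⟨h1, h2⟩ := ih t ht h
      exact ⟨mem_leaves_node.mpr ⟨t, ht, h1⟩, mem_leaves_node.mpr ⟨t, ht, h2⟩⟩
    · exact ⟨mem_leaves_node.mpr ⟨t, ht, hx⟩, mem_leaves_node.mpr ⟨s, hs, hy⟩⟩

theorem adj_of_subtree_adj : ∀ (T : Cotree V) {u : Cotree V} {x y : V},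
    u ∈ T.subtrees → u.adj x y → T.adj x y := by
  refine indOn ?_ ?_
  · intro v u x y h1 h2
    rw [mem_subtrees_leaf] at h1; subst h1; exact h2
  · intro b ts ih u x y h1 h2
    rcases mem_subtrees_node.mp h1 with rfl | ⟨t, ht, h1⟩
    · exact h2
    · exact adj_node.mpr (Or.inl ⟨t, ht, ih t ht h1 h2⟩)

theorem subtree_adj_of_adj : ∀ (T : Cotree V), T.leaves.Nodup → ∀ {u : Cotree V} {x y : V},
    u ∈ T.subtrees → x ∈ u.leaves → y ∈ u.leaves → T.adj x y → u.adj x y := by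
  refine indOn ?_ ?_
  · intro v _ u x y hu _ _ h
    rw [mem_subtrees_leaf] at hu; subst hu; exact h
  · intro b ts ih hnd u x y hu hx hy h
    rcases mem_subtrees_node.mp hu with rfl | ⟨t, ht, hu⟩
    · exact h
    have hndf : (ts.flatMap leaves).Nodup := by rwa [leaves_node] at hnd
    have hxt : x ∈ t.leaves := mem_leaves_of_mem_subtrees hu hx
    have hyt : y ∈ t.leaves := mem_leaves_of_mem_subtrees hu hy
    have hadj : t.adj x y := by
      rcases adj_node.mp h with ⟨s, hs, h⟩ | ⟨_, t', ht', s', hs', hne, hx', hy'⟩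
      · obtain ⟨h1, h2⟩ := adj_mem_leaves s h
        have := eq_of_mem_flatMap leaves ts hndf hs ht h1 hxt
        subst this; exact h
      · have h1 := eq_of_mem_flatMap leaves ts hndf ht' ht hx' hxt
        have h2 := eq_of_mem_flatMap leaves ts hndf hs' ht hy' hyt
        exact (hne (h1.trans h2.symm)).elim
    exact ih t ht ((sublist_flatMap' leaves ts ht).nodup hndf) hu hx hy hadj

theorem adj_series {T : Cotree V} {ts : List (Cotree V)} {t s : Cotree V} {x y : V}
    (hu : node true ts ∈ T.subtrees) (ht : t ∈ ts) (hs : s ∈ ts) (hts : t ≠ s)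
    (hx : x ∈ t.leaves) (hy : y ∈ s.leaves) : T.adj x y :=
  adj_of_subtree_adj T hu (adj_node.mpr (Or.inr ⟨rfl, t, ht, s, hs, hts, hx, hy⟩))

theorem not_adj_parallel {T : Cotree V} {ts : List (Cotree V)} {t s : Cotree V} {x y : V}
    (hnd : T.leaves.Nodup) (hu : node false ts ∈ T.subtrees)
    (ht : t ∈ ts) (hs : s ∈ ts) (hts : t ≠ s)
    (hx : x ∈ t.leaves) (hy : y ∈ s.leaves) : ¬ T.adj x y := by
  intro h
  have hndf : (ts.flatMap leaves).Nodup := by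
    have := leaves_nodup_of_mem hnd hu
    rwa [leaves_node] at this
  have h' := subtree_adj_of_adj T hnd hu (mem_leaves_node.mpr ⟨t, ht, hx⟩)
    (mem_leaves_node.mpr ⟨s, hs, hy⟩) h
  rcases adj_node.mp h' with ⟨c, hc, hadj⟩ | ⟨hb, _⟩
  · obtain ⟨h1, h2⟩ := adj_mem_leaves c hadj
    have e1 := eq_of_mem_flatMap leaves ts hndf hc ht h1 hx
    have e2 := eq_of_mem_flatMap leaves ts hndf hc hs h2 hy
    exact hts (e1 ▸ e2)
  · simp at hb

theorem graphPlus_adj_some_some {T : Cotree V} {N : Set V} {a b : V} :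
    (graphPlus T N).Adj (some a) (some b) ↔ a ≠ b ∧ (T.adj a b ∨ T.adj b a) := by
  simp [graphPlus, SimpleGraph.fromRel_adj]

theorem graphPlus_adj_none_some {T : Cotree V} {N : Set V} {b : V} :
    (graphPlus T N).Adj none (some b) ↔ b ∈ N := by
  simp [graphPlus, SimpleGraph.fromRel_adj]

theorem graphPlus_adj_some_none {T : Cotree V} {N : Set V} {a : V} :
    (graphPlus T N).Adj (some a) none ↔ a ∈ N := by
  simp [graphPlus, SimpleGraph.fromRel_adj]

theorem no_p4 {T : Cotree V} {N : Set V} (hcog : IsCograph (graphPlus T N)) {p q r : V}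
    (hpq : T.adj p q ∨ T.adj q p) (hpN : p ∉ N) (hqN : q ∈ N) (hrN : r ∈ N)
    (hpr : ¬ T.adj p r) (hrp : ¬ T.adj r p) (hqr : ¬ T.adj q r) (hrq : ¬ T.adj r q)
    (hne_qr : q ≠ r) : False := by
  have hne_pq : p ≠ q := fun h => hpN (h ▸ hqN)
  have hne_pr : p ≠ r := fun h => hpN (h ▸ hrN)
  apply hcog
  refine ⟨![some p, some q, none, some r], ?_, ?_⟩
  · intro i j h
    fin_cases i <;> fin_cases j <;>
      simp_all [Matrix.cons_val_zero, Matrix.cons_val_one, Matrix.head_cons]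
  · intro i j
    fin_cases i <;> fin_cases j <;>
      simp [Matrix.cons_val_zero, Matrix.cons_val_one, Matrix.head_cons,
        graphPlus_adj_some_some, graphPlus_adj_none_some, graphPlus_adj_some_none,
        hne_pq, hne_pr, hne_qr, hpq, hpN, hqN, hrN, hpr, hrp, hqr, hrq,
        Ne.symm hne_pq, Ne.symm hne_pr, Ne.symm hne_qr] <;> tauto

end Cotree

theorem stmt_9 {V : Type u} (T : Cotree V) (Nx : Set V)
    (hval : T.valid) (hnd : T.leaves.Nodup) (hNx : ∀ v ∈ Nx, v ∈ T.leaves)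
    (u : Cotree V) (hu : u ∈ T.subtrees) (hforced : Cotree.forced Nx u)
    (N' : Set V) (hcc : Cotree.IsConstrainedCompletion T Nx N') :
    ∀ v ∈ u.leaves, v ∈ N' := by
  obtain ⟨hsub, hlv, hcog⟩ := hcc
  clear hlv
  induction u using Cotree.indOn with
  | hl w =>
    intro v hv
    rw [Cotree.leaves] at hv
    simp at hv
    subst hv
    rw [Cotree.forced] at hforced
    exact hsub hforced
  | hn b ts ih =>
    rcases Cotree.forced_node.mp hforced with hfull | ⟨rfl, hnh⟩ | ⟨rfl, hf⟩
    · exact fun v hv => hsub (hfull v hv)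
    · -- parallel case
      intro v hv
      by_contra hvN
      obtain ⟨c, hc, hvc⟩ := Cotree.mem_leaves_node.mp hv
      have hvalu := Cotree.valid_of_mem_subtrees T hval hu
      rcases Cotree.valid_node.mp hvalu with ⟨hlen, hch⟩
      have hndu : (ts.flatMap Cotree.leaves).Nodup := by
        have := Cotree.leaves_nodup_of_mem hnd hu
        rwa [Cotree.leaves_node] at this
      have hnhc := hnh c hc
      unfold Cotree.hollow at hnhc
      push_neg at hnhc
      obtain ⟨a, hac, haNx⟩ := hnhc
      have haN' := hsub haNx
      obtain ⟨c', hc', hcc'⟩ := Cotree.exists_ne_of_two_le Cotree.leaves ts hlen hndu c hc a hac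
      have hnhc' := hnh c' hc'
      unfold Cotree.hollow at hnhc'
      push_neg at hnhc'
      obtain ⟨b0, hb0c, hb0Nx⟩ := hnhc'
      have hb0N' := hsub hb0Nx
      have hpar : ∀ p q : V, p ∈ c.leaves → q ∈ c'.leaves → ¬ T.adj p q ∧ ¬ T.adj q p :=
        fun p q hp hq => ⟨Cotree.not_adj_parallel hnd hu hc hc' (Ne.symm hcc') hp hq,
          Cotree.not_adj_parallel hnd hu hc' hc hcc' hq hp⟩
      have hneq : ∀ p q : V, p ∈ c.leaves → q ∈ c'.leaves → p ≠ q := by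
        intro p q hp hq h
        exact hcc' (Cotree.eq_of_mem_flatMap Cotree.leaves ts hndu hc' hc
          (by rwa [← h] at hq) hp)
      cases c with
      | leaf w =>
        rw [Cotree.leaves] at hvc hac
        simp at hvc hac
        subst hvc
        subst hac
        exact hvN haN'
      | node bc cs =>
        have hbc : bc = true := by
          have := (hch _ hc).2 bc cs rfl
          simpa using this
        subst hbc
        obtain ⟨d, hd, hvd⟩ := Cotree.mem_leaves_node.mp hvc
        obtain ⟨e, he, hae⟩ := Cotree.mem_leaves_node.mp hac
        have hcsub : Cotree.node true cs ∈ T.subtrees :=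
          Cotree.subtrees_trans T
            (Cotree.mem_subtrees_node.mpr (Or.inr ⟨_, hc, Cotree.self_mem_subtrees _⟩)) hu
        by_cases hde : d = e
        · subst hde
          have hvalc := Cotree.valid_of_mem_subtrees T hval hcsub
          rcases Cotree.valid_node.mp hvalc with ⟨hlen2, hch2⟩
          have hndc : (cs.flatMap Cotree.leaves).Nodup := by
            have := Cotree.leaves_nodup_of_mem hnd hcsub
            rwa [Cotree.leaves_node] at this
          obtain ⟨e', he', hee'⟩ :=
            Cotree.exists_ne_of_two_le Cotree.leaves cs hlen2 hndc d hd v hvd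
          obtain ⟨w, hw⟩ := Cotree.exists_leaf_of_valid e' (hch2 e' he').1
          have hadj_vw : T.adj v w := Cotree.adj_series hcsub hd he' (Ne.symm hee') hvd hw
          have hadj_aw : T.adj a w := Cotree.adj_series hcsub hd he' (Ne.symm hee') hae hw
          have hwc : w ∈ (Cotree.node true cs).leaves := Cotree.mem_leaves_node.mpr ⟨e', he', hw⟩
          by_cases hwN : w ∈ N'
          · exact Cotree.no_p4 hcog (Or.inl hadj_vw) hvN hwN hb0N'
              (hpar v b0 hvc hb0c).1 (hpar v b0 hvc hb0c).2
              (hpar w b0 hwc hb0c).1 (hpar w b0 hwc hb0c).2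
              (hneq w b0 hwc hb0c)
          · exact Cotree.no_p4 hcog (Or.inr hadj_aw) hwN haN' hb0N'
              (hpar w b0 hwc hb0c).1 (hpar w b0 hwc hb0c).2
              (hpar a b0 hac hb0c).1 (hpar a b0 hac hb0c).2
              (hneq a b0 hac hb0c)
        · have hadj_va : T.adj v a := Cotree.adj_series hcsub hd he hde hvd hae
          exact Cotree.no_p4 hcog (Or.inl hadj_va) hvN haN' hb0N'
            (hpar v b0 hvc hb0c).1 (hpar v b0 hvc hb0c).2
            (hpar a b0 hac hb0c).1 (hpar a b0 hac hb0c).2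
            (hneq a b0 hac hb0c)
    · -- series case
      intro v hv
      obtain ⟨t, ht, hvt⟩ := Cotree.mem_leaves_node.mp hv
      have htsub : t ∈ T.subtrees :=
        Cotree.subtrees_trans T
          (Cotree.mem_subtrees_node.mpr (Or.inr ⟨t, ht, Cotree.self_mem_subtrees t⟩)) hu
      exact ih t ht htsub (hf t ht) v hvt
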